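/- Let (σ_N)_N be a sequence of permutations, σ_N a permutation of [N]×[N], satisfying condition (C2), i.e. X_N(σ_N, id)/N² → 0 where id is the identity permutation of [N]×[N]. Then Y_N(σ_N, id) = o(N³), i.e. Y_N(σ_N, id)/N³ → 0 as N → ∞. -/

import Mathlib

open Filter

/-- `X_N(σ,τ) = |{(i,j,k) : σ(i,j) ∈ {τ(i,k), τ(k,j)}}|`. -/
def Xcnt (N : ℕ) (σ τ : Equiv.Perm (Fin N × Fin N)) : ℕ :=
  (Finset.univ.filter fun x : Fin N × Fin N × Fin N =>
    σ (x.1, x.2.1) = τ (x.1, x.2.2) ∨ σ (x.1, x.2.1) = τ (x.2.2, x.2.1)).card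

/-- `Y_N(σ,τ) = Y_{1,N}(σ,τ) + Y_{2,N}(σ,τ)` where `Y_{1,N}` counts the triples `(i,j,k)` with
`π1(σ(i,j)) ∈ {π1(τ(i,k)), π1(τ(k,j))}`, and `Y_{2,N}` the ones with
`π2(σ(i,j)) ∈ {π2(τ(i,k)), π2(τ(k,j))}`. -/
def Ycnt (N : ℕ) (σ τ : Equiv.Perm (Fin N × Fin N)) : ℕ :=
  (Finset.univ.filter fun x : Fin N × Fin N × Fin N =>
    (σ (x.1, x.2.1)).1 = (τ (x.1, x.2.2)).1 ∨ (σ (x.1, x.2.1)).1 = (τ (x.2.2, x.2.1)).1).card +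
  (Finset.univ.filter fun x : Fin N × Fin N × Fin N =>
    (σ (x.1, x.2.1)).2 = (τ (x.1, x.2.2)).2 ∨ (σ (x.1, x.2.1)).2 = (τ (x.2.2, x.2.1)).2).card

open Finset in
lemma cardk_le {N : ℕ} (f : Fin N × Fin N → Fin N) :
    (univ.filter fun x : Fin N × Fin N × Fin N => f (x.1, x.2.1) = x.2.2).card ≤ N ^ 2 := by
  have h := Finset.card_le_card_of_injOn (fun x : Fin N × Fin N × Fin N => (x.1, x.2.1))
    (s := univ.filter fun x : Fin N × Fin N × Fin N => f (x.1, x.2.1) = x.2.2)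
    (t := (univ : Finset (Fin N × Fin N)))
    (fun _ _ => mem_univ _)
    (by
      intro x hx y hy hxy
      simp only [mem_coe, mem_filter, mem_univ, true_and] at hx hy
      have h1 : x.1 = y.1 := congrArg (fun z : Fin N × Fin N => z.1) hxy
      have h2 : x.2.1 = y.2.1 := congrArg (fun z : Fin N × Fin N => z.2) hxy
      have h3 : x.2.2 = y.2.2 := by rw [← hx, ← hy, h1, h2]
      exact Prod.ext h1 (Prod.ext h2 h3))
  simpa [sq] using h

open Finset in
lemma cardfix_le {N : ℕ} (σ : Equiv.Perm (Fin N × Fin N)) (p : Fin N × Fin N → Prop)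
    [DecidablePred p] (g : Fin N × Fin N → Fin N)
    (hp : ∀ q : Fin N × Fin N, p q → σ q = (q.1, g q) ∨ σ q = (g q, q.2)) :
    (univ.filter fun x : Fin N × Fin N × Fin N => p (x.1, x.2.1)).card
      ≤ N * Xcnt N σ (Equiv.refl (Fin N × Fin N)) := by
  classical
  set T := (univ.filter fun x : Fin N × Fin N × Fin N =>
    σ (x.1, x.2.1) = Equiv.refl (Fin N × Fin N) (x.1, x.2.2) ∨
      σ (x.1, x.2.1) = Equiv.refl (Fin N × Fin N) (x.2.2, x.2.1)) with hT
  have hX : Xcnt N σ (Equiv.refl (Fin N × Fin N)) = T.card := rfl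
  have h := Finset.card_le_card_of_injOn
    (fun x : Fin N × Fin N × Fin N => (x.2.2, (x.1, x.2.1, g (x.1, x.2.1))))
    (s := univ.filter fun x : Fin N × Fin N × Fin N => p (x.1, x.2.1))
    (t := (univ : Finset (Fin N)) ×ˢ T) ?_ ?_
  · rw [Finset.card_product, Finset.card_univ, Fintype.card_fin] at h
    rw [hX]; omega
  · intro x hx
    simp only [mem_coe, mem_filter, mem_univ, true_and] at hx
    refine Finset.mem_product.mpr ⟨mem_univ _, ?_⟩
    rw [hT]
    simp only [mem_filter, mem_univ, true_and, Equiv.refl_apply]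
    exact Finset.mem_filter.mpr ⟨mem_univ _, hp _ hx⟩
  · intro x hx y hy hxy
    have h1 : x.2.2 = y.2.2 := congrArg Prod.fst hxy
    have h2 : x.1 = y.1 := congrArg (fun z => z.2.1) hxy
    have h3 : x.2.1 = y.2.1 := congrArg (fun z => z.2.2.1) hxy
    exact Prod.ext h2 (Prod.ext h3 h1)

open Finset in
lemma key_bound (N : ℕ) (σ : Equiv.Perm (Fin N × Fin N)) :
    Ycnt N σ (Equiv.refl (Fin N × Fin N)) ≤
      2 * N ^ 2 + 2 * (N * Xcnt N σ (Equiv.refl (Fin N × Fin N))) := by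
  classical
  unfold Ycnt
  simp only [Equiv.refl_apply]
  have h1 : (univ.filter fun x : Fin N × Fin N × Fin N =>
      (σ (x.1, x.2.1)).1 = x.1 ∨ (σ (x.1, x.2.1)).1 = x.2.2).card ≤
      N * Xcnt N σ (Equiv.refl (Fin N × Fin N)) + N ^ 2 := by
    rw [filter_or]
    refine le_trans (card_union_le _ _) (Nat.add_le_add ?_ ?_)
    · exact cardfix_le σ (fun q => (σ q).1 = q.1) (fun q => (σ q).2)
        (fun q hq => Or.inl (Prod.ext hq rfl))
    · exact cardk_le (fun q => (σ q).1)
  have h2 : (univ.filter fun x : Fin N × Fin N × Fin N =>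
      (σ (x.1, x.2.1)).2 = x.2.2 ∨ (σ (x.1, x.2.1)).2 = x.2.1).card ≤
      N ^ 2 + N * Xcnt N σ (Equiv.refl (Fin N × Fin N)) := by
    rw [filter_or]
    refine le_trans (card_union_le _ _) (Nat.add_le_add ?_ ?_)
    · exact cardk_le (fun q => (σ q).2)
    · exact cardfix_le σ (fun q => (σ q).2 = q.2) (fun q => (σ q).1)
        (fun q hq => Or.inr (Prod.ext rfl hq))
  have h3 := Nat.add_le_add h1 h2
  exact h3.trans (le_of_eq (by ring : N * Xcnt N σ (Equiv.refl (Fin N × Fin N)) + N ^ 2 + (N ^ 2 + N * Xcnt N σ (Equiv.refl (Fin N × Fin N))) = 2 * N ^ 2 + 2 * (N * Xcnt N σ (Equiv.refl (Fin N × Fin N)))))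

theorem stmt4 (σ : (N : ℕ) → Equiv.Perm (Fin N × Fin N))
    (hC2 : Tendsto (fun N : ℕ => (Xcnt N (σ N) (Equiv.refl (Fin N × Fin N)) : ℝ) / (N : ℝ) ^ 2)
      atTop (nhds 0)) :
    Tendsto (fun N : ℕ => (Ycnt N (σ N) (Equiv.refl (Fin N × Fin N)) : ℝ) / (N : ℝ) ^ 3)
      atTop (nhds 0) := by
  have hg : Tendsto (fun N : ℕ => 2 / (N : ℝ) +
      2 * ((Xcnt N (σ N) (Equiv.refl (Fin N × Fin N)) : ℝ) / (N : ℝ) ^ 2)) atTop (nhds 0) := by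
    have h1 : Tendsto (fun N : ℕ => 2 / (N : ℝ)) atTop (nhds 0) :=
      tendsto_const_div_atTop_nhds_zero_nat 2
    have h2 := hC2.const_mul (2 : ℝ)
    simpa using h1.add h2
  refine squeeze_zero (fun n => by positivity) (fun n => ?_) hg
  rcases Nat.eq_zero_or_pos n with hn | hn
  · subst hn; simp
  · have hn' : (0 : ℝ) < (n : ℝ) := by exact_mod_cast hn
    have hkey : (Ycnt n (σ n) (Equiv.refl (Fin n × Fin n)) : ℝ) ≤
        2 * (n : ℝ) ^ 2 + 2 * ((n : ℝ) * (Xcnt n (σ n) (Equiv.refl (Fin n × Fin n)) : ℝ)) := by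
      exact_mod_cast Nat.cast_le.mpr (key_bound n (σ n))
    calc (Ycnt n (σ n) (Equiv.refl (Fin n × Fin n)) : ℝ) / (n : ℝ) ^ 3
        ≤ (2 * (n : ℝ) ^ 2 + 2 * ((n : ℝ) * (Xcnt n (σ n) (Equiv.refl (Fin n × Fin n)) : ℝ)))
            / (n : ℝ) ^ 3 := by gcongr
      _ = 2 / (n : ℝ) + 2 * ((Xcnt n (σ n) (Equiv.refl (Fin n × Fin n)) : ℝ) / (n : ℝ) ^ 2) := by
          field_simp
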